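/- Let D be an (N+3)×(N+3) positive semidefinite Hermitian matrix over ℂ whose kernel (as right null space) is exactly spanned by the three vectors ψ_a = (z_1^{a−1}, ..., z_{N+3}^{a−1}) for a = 1, 2, 3, where z_1, ..., z_{N+3} are distinct complex numbers. For any choice of three distinct indices a, b, c, let D_{\{a,b,c\}} denote the N×N matrix obtained by deleting rows and columns a, b, c. Then det(D_{\{a,b,c\}}) / |Δ3(z_a, z_b, z_c)|² is independent of the choice of (a, b, c), where Δ3(z_a, z_b, z_c) = (z_a − z_b)(z_a − z_c)(z_b − z_c). -/

import Mathlib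

open scoped ComplexOrder

/-- The `N×N` submatrix of `D` obtained by deleting the rows and columns `a, b, c`. -/
def delMat {n : ℕ} (D : Matrix (Fin n) (Fin n) ℂ) (a b c : Fin n) :
    Matrix {i : Fin n // i ≠ a ∧ i ≠ b ∧ i ≠ c} {i : Fin n // i ≠ a ∧ i ≠ b ∧ i ≠ c} ℂ :=
  D.submatrix (fun i => i.1) (fun i => i.1)

open Matrix

namespace Stmt18Aux

/-- Column reindexing function: first `N` columns get powers `3..N+2`, last 3 columns
get powers `0,1,2`. -/
def colFun (N : ℕ) : Fin (N + 3) → Fin (N + 3) := fun j =>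
  if _ : (j : ℕ) < N then ⟨(j : ℕ) + 3, by omega⟩ else ⟨(j : ℕ) - N, by omega⟩

lemma colFun_injective (N : ℕ) : Function.Injective (colFun N) := by
  intro u v h
  have hu := u.isLt; have hv := v.isLt
  unfold colFun at h
  apply Fin.ext
  split_ifs at h <;> (have := congrArg Fin.val h; simp only at this <;> omega)

/-- The column permutation. -/
noncomputable def colPerm (N : ℕ) : Equiv.Perm (Fin (N + 3)) :=
  Equiv.ofBijective _ ((Fintype.bijective_iff_injective_and_card _).mpr
    ⟨colFun_injective N, rfl⟩)

/-- Column-permuted Vandermonde matrix. -/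
noncomputable def Wm (N : ℕ) (z : Fin (N + 3) → ℂ) : Matrix (Fin (N + 3)) (Fin (N + 3)) ℂ :=
  (Matrix.vandermonde z).submatrix id (colPerm N)

lemma Wm_natAdd (N : ℕ) (z : Fin (N + 3) → ℂ) (i : Fin (N + 3)) (k : Fin 3) :
    Wm N z i (Fin.natAdd N k) = z i ^ (k : ℕ) := by
  show z i ^ ((colFun N (Fin.natAdd N k)) : ℕ) = _
  unfold colFun
  rw [dif_neg (by simp only [Fin.coe_natAdd]; omega)]
  congr 1
  simp only [Fin.coe_natAdd]
  omega

lemma Wm_det_ne_zero (N : ℕ) (z : Fin (N + 3) → ℂ) (hz : Function.Injective z) :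
    (Wm N z).det ≠ 0 := by
  have h : (Wm N z).det = Equiv.Perm.sign (colPerm N) * (Matrix.vandermonde z).det :=
    Matrix.det_permute' _ _
  have h2 : (Matrix.vandermonde z).det ≠ 0 := Matrix.det_vandermonde_ne_zero_iff.mpr hz
  rw [h]
  rcases Int.units_eq_one_or (Equiv.Perm.sign (colPerm N)) with hs | hs <;>
    rw [hs] <;> simpa using h2

lemma card_compl {n : ℕ} (a b c : Fin (n + 3)) (hab : a ≠ b) (hac : a ≠ c) (hbc : b ≠ c) :
    Fintype.card {i : Fin (n + 3) // i ≠ a ∧ i ≠ b ∧ i ≠ c} = n := by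
  rw [Fintype.card_subtype]
  have h : (Finset.univ.filter fun i : Fin (n + 3) => i ≠ a ∧ i ≠ b ∧ i ≠ c)
      = Finset.univ \ {a, b, c} := by
    ext i; simp [not_or, and_assoc]
  rw [h, Finset.card_sdiff_of_subset (Finset.subset_univ _)]
  have h3 : ({a, b, c} : Finset (Fin (n + 3))).card = 3 := by
    rw [Finset.card_insert_of_notMem (by simp [hab, hac]),
      Finset.card_insert_of_notMem (by simp [hbc]), Finset.card_singleton]
  simp [h3]

/-- Key lemma: the minor times `|det W|²` equals `det H` times `|Δ3|²`. -/
lemma keyLemma (N : ℕ) (z : Fin (N + 3) → ℂ) (hz : Function.Injective z)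
    (D : Matrix (Fin (N + 3)) (Fin (N + 3)) ℂ) (H : Matrix (Fin N) (Fin N) ℂ)
    (hD : D = ((Wm N z)⁻¹.submatrix (Fin.castAdd 3) id)ᴴ * H *
      (Wm N z)⁻¹.submatrix (Fin.castAdd 3) id)
    (a b c : Fin (N + 3)) (hab : a ≠ b) (hac : a ≠ c) (hbc : b ≠ c) :
    (delMat D a b c).det * ((‖(Wm N z).det‖ ^ 2 : ℝ) : ℂ)
      = H.det * ((‖(z a - z b) * (z a - z c) * (z b - z c)‖ ^ 2 : ℝ) : ℂ) := by
  classical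
  set W := Wm N z with hW
  have hWdet : W.det ≠ 0 := Wm_det_ne_zero N z hz
  set R := W⁻¹ with hR
  set P := R.submatrix (Fin.castAdd 3) id with hP
  have hWR : W * R = 1 := Matrix.mul_nonsing_inv _ (isUnit_iff_ne_zero.mpr hWdet)
  have hRW : R * W = 1 := Matrix.nonsing_inv_mul _ (isUnit_iff_ne_zero.mpr hWdet)
  -- index equivalences
  set e := Fintype.equivFinOfCardEq (card_compl a b c hab hac hbc) with he
  set f : Fin N ⊕ Fin 3 → Fin (N + 3) :=
    Sum.elim (fun j => ((e.symm j : {i : Fin (N + 3) // i ≠ a ∧ i ≠ b ∧ i ≠ c}) : Fin (N + 3)))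
      ![a, b, c] with hf
  have hne : ∀ (i : Fin 3) (j : Fin N),
      ((e.symm j : {i : Fin (N + 3) // i ≠ a ∧ i ≠ b ∧ i ≠ c}) : Fin (N + 3)) ≠ ![a, b, c] i := by
    intro i j
    obtain ⟨k1, k2, k3⟩ := (e.symm j).2
    fin_cases i
    · simpa using k1
    · simpa using k2
    · simpa using k3
  have hκinj : Function.Injective (![a, b, c] : Fin 3 → Fin (N + 3)) := by
    intro i j hij
    fin_cases i <;> fin_cases j <;> first
      | rfl
      | (exfalso; revert hij; simp only [Matrix.cons_val_zero, Matrix.cons_val_one,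
          Matrix.head_cons, Matrix.cons_val_two, Matrix.tail_cons]
         first
          | exact fun h => hab h | exact fun h => hac h | exact fun h => hbc h
          | exact fun h => hab h.symm | exact fun h => hac h.symm | exact fun h => hbc h.symm)
  have hfinj : Function.Injective f := by
    intro u v huv
    match u, v with
    | Sum.inl u, Sum.inl v =>
      simp only [hf, Sum.elim_inl] at huv
      exact congrArg Sum.inl (e.symm.injective (Subtype.ext huv))
    | Sum.inl u, Sum.inr v =>
      simp only [hf, Sum.elim_inl, Sum.elim_inr] at huv
      exact absurd huv (hne v u)
    | Sum.inr u, Sum.inl v =>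
      simp only [hf, Sum.elim_inl, Sum.elim_inr] at huv
      exact absurd huv.symm (hne u v)
    | Sum.inr u, Sum.inr v =>
      simp only [hf, Sum.elim_inr] at huv
      exact congrArg Sum.inr (hκinj huv)
  have hfbij : Function.Bijective f :=
    (Fintype.bijective_iff_injective_and_card f).mpr ⟨hfinj, by simp⟩
  set p : (Fin N ⊕ Fin 3) ≃ Fin (N + 3) := Equiv.ofBijective f hfbij with hp
  set q : (Fin N ⊕ Fin 3) ≃ Fin (N + 3) := finSumFinEquiv with hq
  set Wh := W.submatrix p q with hWh
  set Rh := R.submatrix q p with hRh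
  have hWhRh : Wh * Rh = 1 := by
    rw [hWh, hRh, Matrix.submatrix_mul_equiv W R _ q _, hWR, Matrix.submatrix_one_equiv]
  -- block identity
  have hsplit : Matrix.fromBlocks
      (Wh.toBlocks₁₁ * Rh.toBlocks₁₁ + Wh.toBlocks₁₂ * Rh.toBlocks₂₁)
      (Wh.toBlocks₁₁ * Rh.toBlocks₁₂ + Wh.toBlocks₁₂ * Rh.toBlocks₂₂)
      (Wh.toBlocks₂₁ * Rh.toBlocks₁₁ + Wh.toBlocks₂₂ * Rh.toBlocks₂₁)
      (Wh.toBlocks₂₁ * Rh.toBlocks₁₂ + Wh.toBlocks₂₂ * Rh.toBlocks₂₂)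
      = Matrix.fromBlocks 1 0 0 1 := by
    rw [← Matrix.fromBlocks_multiply, Matrix.fromBlocks_toBlocks, Matrix.fromBlocks_toBlocks]
    exact hWhRh.trans Matrix.fromBlocks_one.symm
  have h11 := congrArg Matrix.toBlocks₁₁ hsplit
  have h21 := congrArg Matrix.toBlocks₂₁ hsplit
  simp only [Matrix.toBlocks_fromBlocks₁₁, Matrix.toBlocks_fromBlocks₂₁] at h11 h21
  have key : Wh * Matrix.fromBlocks Rh.toBlocks₁₁ 0 Rh.toBlocks₂₁ 1 =
      Matrix.fromBlocks 1 Wh.toBlocks₁₂ 0 Wh.toBlocks₂₂ := by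
    conv_lhs => rw [← Matrix.fromBlocks_toBlocks Wh]
    rw [Matrix.fromBlocks_multiply, h11, h21]
    simp
  have hdetkey := congrArg Matrix.det key
  rw [Matrix.det_mul, Matrix.det_fromBlocks_zero₁₂, Matrix.det_fromBlocks_zero₂₁] at hdetkey
  simp only [Matrix.det_one, mul_one, one_mul] at hdetkey
  -- |det Wh| = |det W|
  have hWhdet : ‖Wh.det‖ = ‖W.det‖ := by
    have hcomp : Wh = (W.submatrix ⇑p ⇑p).submatrix id ⇑(q.trans p.symm) := by
      ext x y
      simp [hWh]
    rw [hcomp, Matrix.det_permute', Matrix.det_submatrix_equiv_self]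
    rcases Int.units_eq_one_or (Equiv.Perm.sign (q.trans p.symm)) with hs | hs <;>
      rw [hs] <;> simp
  -- the 3×3 block is a Vandermonde on z a, z b, z c
  have hW22 : Wh.toBlocks₂₂.det = -((z a - z b) * (z a - z c) * (z b - z c)) := by
    have hent : ∀ i j : Fin 3, Wh.toBlocks₂₂ i j = z (![a, b, c] i) ^ (j : ℕ) := by
      intro i j
      show W (p (Sum.inr i)) (q (Sum.inr j)) = _
      have hq' : q (Sum.inr j) = Fin.natAdd N j := by simp [hq]
      have hp' : p (Sum.inr i) = ![a, b, c] i := rfl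
      rw [hq', hp', hW]
      exact Wm_natAdd N z _ j
    rw [Matrix.det_fin_three]
    simp only [hent]
    simp
    ring
  -- the deleted minor
  set ι : Fin N → Fin (N + 3) := fun j => f (Sum.inl j) with hι
  have hXY : Rh.toBlocks₁₁ = P.submatrix id ι := by
    ext u v
    show R (q (Sum.inl u)) (p (Sum.inl v)) = P u (ι v)
    have hq' : q (Sum.inl u) = Fin.castAdd 3 u := by simp [hq]
    rw [hq']
    rfl
  have hsub : D.submatrix ι ι = (P.submatrix id ι)ᴴ * H * P.submatrix id ι := by
    rw [hD]
    rw [← Matrix.submatrix_mul_equiv (Pᴴ * H) P ι (Equiv.refl (Fin N)) ι]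
    rw [← Matrix.submatrix_mul_equiv Pᴴ H ι (Equiv.refl (Fin N)) (⇑(Equiv.refl (Fin N)))]
    simp [Matrix.conjTranspose_submatrix]
  have hswap : D.submatrix ι ι = (delMat D a b c).submatrix (⇑e.symm) (⇑e.symm) := rfl
  have hdel : (delMat D a b c).det = ((P.submatrix id ι)ᴴ * H * P.submatrix id ι).det := by
    rw [← hsub, hswap, Matrix.det_submatrix_equiv_self e.symm]
  -- put it together
  have hdetY : (delMat D a b c).det
      = H.det * ((‖(P.submatrix id ι).det‖ ^ 2 : ℝ) : ℂ) := by
    rw [hdel, Matrix.det_mul, Matrix.det_mul, Matrix.det_conjTranspose,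
      ← Complex.normSq_eq_norm_sq, Complex.normSq_eq_conj_mul_self]
    simp only [Complex.star_def]
    ring
  have habsY : ‖(P.submatrix id ι).det‖ * ‖W.det‖
      = ‖(z a - z b) * (z a - z c) * (z b - z c)‖ := by
    rw [hXY] at hdetkey
    rw [← hWhdet, ← norm_mul, mul_comm, hdetkey, hW22, norm_neg]
  rw [hdetY, ← habsY]
  push_cast
  ring

end Stmt18Aux

/-- For a positive semidefinite Hermitian `(N+3)×(N+3)` matrix `D` whose right
null space is exactly spanned by the vectors `(z_i^{a−1})`, `a = 1,2,3`, the
ratio `det(D_{\{a,b,c\}})/|Δ3(z_a,z_b,z_c)|²` is independent of the choice of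
the three deleted indices. -/
theorem stmt18 (N : ℕ) (z : Fin (N + 3) → ℂ) (hz : Function.Injective z)
    (D : Matrix (Fin (N + 3)) (Fin (N + 3)) ℂ) (hD : D.PosSemidef)
    (hker : ∀ v : Fin (N + 3) → ℂ, D.mulVec v = 0 ↔
      v ∈ Submodule.span ℂ
        ({fun _ => (1 : ℂ), fun i => z i, fun i => (z i) ^ 2} : Set (Fin (N + 3) → ℂ)))
    (a b c a' b' c' : Fin (N + 3))
    (hab : a ≠ b) (hac : a ≠ c) (hbc : b ≠ c)
    (hab' : a' ≠ b') (hac' : a' ≠ c') (hbc' : b' ≠ c') :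
    (delMat D a b c).det /
        ((‖(z a - z b) * (z a - z c) * (z b - z c)‖ ^ 2 : ℝ) : ℂ)
      = (delMat D a' b' c').det /
        ((‖(z a' - z b') * (z a' - z c') * (z b' - z c')‖ ^ 2 : ℝ) : ℂ) := by
  classical
  obtain ⟨B, hB⟩ : ∃ B : Matrix (Fin (N + 3)) (Fin (N + 3)) ℂ, D = Bᴴ * B := by
    open MatrixOrder in
    obtain ⟨X, hX, -, hXD⟩ := CFC.exists_sqrt_of_isSelfAdjoint_of_quasispectrumRestricts
      hD.isHermitian (QuasispectrumRestricts.nnreal_of_nonneg hD.nonneg)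
    refine ⟨X, ?_⟩
    have hXs : Xᴴ = X := hX
    rw [hXs]
    simpa using hXD.symm
  set W := Stmt18Aux.Wm N z with hW
  have hWdet : W.det ≠ 0 := Stmt18Aux.Wm_det_ne_zero N z hz
  set R := W⁻¹ with hR
  set P := R.submatrix (Fin.castAdd 3) id with hP
  set C := (B * W).submatrix id (Fin.castAdd 3) with hC
  -- B kills the kernel vectors
  have hBW0 : ∀ (k : Fin 3) (i : Fin (N + 3)), (B * W) i (Fin.natAdd N k) = 0 := by
    intro k i
    set v : Fin (N + 3) → ℂ := fun m => z m ^ (k : ℕ) with hv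
    have hvmem : v ∈ Submodule.span ℂ
        ({fun _ => (1 : ℂ), fun i => z i, fun i => (z i) ^ 2} : Set (Fin (N + 3) → ℂ)) := by
      apply Submodule.subset_span
      fin_cases k <;> simp only [hv]
      · left; funext m; simp
      · right; left; funext m; simp
      · right; right; rfl
    have hDv : D.mulVec v = 0 := (hker v).mpr hvmem
    have hBv : B.mulVec v = 0 := by
      apply dotProduct_star_self_eq_zero.mp
      rw [Matrix.star_mulVec, ← dotProduct_mulVec, Matrix.mulVec_mulVec, ← hB, hDv,
        dotProduct_zero]
    have := congrFun hBv i
    simpa [Matrix.mul_apply, Matrix.mulVec, dotProduct, hv, hW,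
      Stmt18Aux.Wm_natAdd N z] using this
  -- B factors through P
  have hWR : W * R = 1 := Matrix.mul_nonsing_inv _ (isUnit_iff_ne_zero.mpr hWdet)
  have hBP : B = C * P := by
    have h1 : B = B * W * R := by rw [Matrix.mul_assoc, hWR, Matrix.mul_one]
    rw [h1]
    ext i l
    rw [Matrix.mul_apply, Matrix.mul_apply, Fin.sum_univ_add]
    simp only [hC, hP, Matrix.submatrix_apply, id_eq]
    have hzero : ∑ k : Fin 3, (B * W) i (Fin.natAdd N k) * R (Fin.natAdd N k) l = 0 :=
      Finset.sum_eq_zero fun k _ => by rw [hBW0 k i, zero_mul]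
    rw [hzero, add_zero]
  have hDform : D = Pᴴ * (Cᴴ * C) * P := by
    rw [hB, hBP]
    simp only [Matrix.conjTranspose_mul, Matrix.mul_assoc]
  have k1 := Stmt18Aux.keyLemma N z hz D (Cᴴ * C) hDform a b c hab hac hbc
  have k2 := Stmt18Aux.keyLemma N z hz D (Cᴴ * C) hDform a' b' c' hab' hac' hbc'
  have habs : ∀ u v w : Fin (N + 3), u ≠ v → u ≠ w → v ≠ w →
      ((‖(z u - z v) * (z u - z w) * (z v - z w)‖ ^ 2 : ℝ) : ℂ) ≠ 0 := by
    intro u v w huv huw hvw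
    have h1 : z u - z v ≠ 0 := sub_ne_zero.mpr fun h => huv (hz h)
    have h2 : z u - z w ≠ 0 := sub_ne_zero.mpr fun h => huw (hz h)
    have h3 : z v - z w ≠ 0 := sub_ne_zero.mpr fun h => hvw (hz h)
    simp only [ne_eq, Complex.ofReal_eq_zero]
    exact pow_ne_zero _ (norm_ne_zero_iff.mpr (mul_ne_zero (mul_ne_zero h1 h2) h3))
  have hwne : ((‖W.det‖ ^ 2 : ℝ) : ℂ) ≠ 0 := by
    simp only [ne_eq, Complex.ofReal_eq_zero]
    exact pow_ne_zero _ (norm_ne_zero_iff.mpr hWdet)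
  rw [div_eq_div_iff (habs a b c hab hac hbc) (habs a' b' c' hab' hac' hbc')]
  have e1 : (delMat D a b c).det * ((‖W.det‖ ^ 2 : ℝ) : ℂ) *
      ((‖(z a' - z b') * (z a' - z c') * (z b' - z c')‖ ^ 2 : ℝ) : ℂ)
      = (delMat D a' b' c').det * ((‖W.det‖ ^ 2 : ℝ) : ℂ) *
      ((‖(z a - z b) * (z a - z c) * (z b - z c)‖ ^ 2 : ℝ) : ℂ) := by
    rw [k1, k2]; ring
  apply mul_right_cancel₀ hwne
  linear_combination ((‖(z a' - z b') * (z a' - z c') * (z b' - z c')‖ ^ 2 : ℝ) : ℂ) * k1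
    - ((‖(z a - z b) * (z a - z c) * (z b - z c)‖ ^ 2 : ℝ) : ℂ) * k2
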